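/- Let q be a prime power, n ≥ 1, and let A_1, …, A_m and B_1, …, B_m be nonzero linear subspaces of F_q^{n+1} (representing nonempty projective subspaces of the n-dimensional projective space over F_q). Assume the pair of families is cross-intersecting in the projective sense: A_i ∩ B_i = {0} for each 1 ≤ i ≤ m and A_i ∩ B_j ≠ {0} whenever 1 ≤ i < j ≤ m. Then m ≤ (q^{n+1} − 1)/(q − 1) − 1. -/

import Mathlib

open Module Finset

section PCAux

variable {K : Type*} [Field K]




/-- A disjoint subspace can be enlarged to a complement. -/
lemma pc_exists_isCompl_of_inf_eq_bot {V : Type*} [AddCommGroup V] [Module K V]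
    (A B : Submodule K V) (h : A ⊓ B = ⊥) : ∃ C, A ≤ C ∧ IsCompl C B := by
  obtain ⟨D, hD⟩ := Submodule.exists_isCompl (A ⊔ B)
  refine ⟨A ⊔ D, le_sup_left, ?_, ?_⟩
  · rw [disjoint_iff, Submodule.eq_bot_iff]
    rintro x ⟨hx1, hx2⟩
    obtain ⟨a, ha, d, hd, rfl⟩ := Submodule.mem_sup.1 hx1
    have hdm : d ∈ D ⊓ (A ⊔ B) := by
      refine ⟨hd, ?_⟩
      have : d = (a + d) - a := by abel
      rw [this]
      exact sub_mem (Submodule.mem_sup_right hx2) (Submodule.mem_sup_left ha)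
    have hd0 : d = 0 := by
      have := hD.inf_eq_bot
      rw [inf_comm] at this
      rw [← Submodule.mem_bot (R := K), ← this]; exact hdm
    subst hd0
    have : a + 0 ∈ A ⊓ B := ⟨by simpa using ha, hx2⟩
    rw [h] at this
    simpa using this
  · rw [codisjoint_iff, sup_assoc, sup_comm D B, ← sup_assoc]
    exact codisjoint_iff.1 hD.codisjoint

/-- Triangular pairing implies linear independence. -/
lemma pc_linearIndependent_of_triangular {W ι : Type*} [AddCommGroup W] [Module K W]
    [Fintype ι] [LinearOrder ι] (x : ι → W) (E : ι → (W →ₗ[K] K))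
    (hd : ∀ i, E i (x i) ≠ 0) (hz : ∀ i j, i < j → E j (x i) = 0) :
    LinearIndependent K x := by
  rw [linearIndependent_iff']
  intro s g hsum i hi
  by_contra hgi
  classical
  set t := s.filter (fun i => g i ≠ 0) with ht
  have hne : t.Nonempty := ⟨i, by simp [ht, hi, hgi]⟩
  obtain ⟨j, hjt, hjmax⟩ := t.exists_max_image id hne
  have hjs : j ∈ s := (Finset.mem_filter.1 hjt).1
  have hgj : g j ≠ 0 := (Finset.mem_filter.1 hjt).2
  have h0 : (∑ k ∈ s, g k * E j (x k)) = 0 := by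
    have := congrArg (E j) hsum
    simpa [map_sum] using this
  rw [Finset.sum_eq_single_of_mem j hjs] at h0
  · exact hd j (by
      have := mul_eq_zero.1 h0
      tauto)
  · intro k hk hkj
    rcases lt_or_gt_of_ne hkj with hlt | hgt
    · rw [hz k j hlt, mul_zero]
    · have : g k = 0 := by
        by_contra hgk
        have hkt : k ∈ t := Finset.mem_filter.2 ⟨hk, hgk⟩
        exact absurd (hjmax k hkt) (not_le.2 hgt)
      rw [this, zero_mul]



/-- An alternating map vanishing on all sorted tuples of standard basis vectors is zero. -/
lemma pc_alt_eq_zero_of_forall_sorted {N b : ℕ}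
    (ω : AlternatingMap K (Fin N → K) K (Fin b))
    (h : ∀ (s : Finset (Fin N)) (hs : s.card = b),
      ω (fun j => Pi.basisFun K (Fin N) ((s.orderIsoOfFin hs j : Fin N))) = 0) :
    ω = 0 := by
  classical
  have key : ω.toMultilinearMap = (0 : AlternatingMap K (Fin N → K) K (Fin b)).toMultilinearMap := by
    apply Basis.ext_multilinear (fun _ => Pi.basisFun K (Fin N))
    intro v
    simp only [AlternatingMap.coe_multilinearMap, AlternatingMap.zero_apply,
      MultilinearMap.zero_apply]
    by_cases hv : Function.Injective v
    · -- sorted reordering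
      set s : Finset (Fin N) := Finset.univ.map ⟨v, hv⟩ with hs
      have hcard : s.card = b := by simp [hs]
      have hmem : ∀ j, v j ∈ s := fun j => by simp [hs]
      let vE : Fin b ≃ {x // x ∈ s} :=
        Equiv.ofBijective (fun j => ⟨v j, hmem j⟩)
          (by
            rw [Fintype.bijective_iff_injective_and_card]
            constructor
            · intro a b' hab
              exact hv (congrArg Subtype.val hab)
            · simp [hcard])
      let π : Equiv.Perm (Fin b) := vE.trans (s.orderIsoOfFin hcard).toEquiv.symm
      have hvp : ∀ j, ((s.orderIsoOfFin hcard) (π j) : Fin N) = v j := by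
        intro j
        simp [π, vE]
      have := ω.map_perm (fun j => Pi.basisFun K (Fin N) ((s.orderIsoOfFin hcard j : Fin N))) π
      have heq : (fun j => Pi.basisFun K (Fin N) ((s.orderIsoOfFin hcard (π j) : Fin N)))
          = fun j => Pi.basisFun K (Fin N) (v j) := by
        funext j; rw [hvp j]
      rw [Function.comp_def, heq, h s hcard, smul_zero] at this
      exact this
    · -- repeated entry
      rw [Function.not_injective_iff] at hv
      obtain ⟨k, l, hkl, hne⟩ := hv
      exact ω.map_eq_zero_of_eq _ (by rw [hkl]) hne
  ext v
  have := congrArg (fun f => f v) key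
  simpa using this




/-- A linearly independent family of alternating `b`-forms on `K^N` has at most
`N.choose b` members. -/
lemma pc_card_le_choose {N b : ℕ} {ι : Type*} [Fintype ι]
    (α : ι → AlternatingMap K (Fin N → K) K (Fin b))
    (h : LinearIndependent K α) : Fintype.card ι ≤ N.choose b := by
  classical
  let Φ : AlternatingMap K (Fin N → K) K (Fin b) →ₗ[K]
      ({s : Finset (Fin N) // s.card = b} → K) :=
    { toFun := fun ω s => ω (fun j => Pi.basisFun K (Fin N) ((s.1.orderIsoOfFin s.2 j : Fin N)))
      map_add' := by intro x y; funext s; simp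
      map_smul' := by intro c x; funext s; simp }
  have hker : LinearMap.ker Φ = ⊥ := by
    rw [LinearMap.ker_eq_bot']
    intro ω hω
    refine pc_alt_eq_zero_of_forall_sorted ω (fun s hs => ?_)
    exact congrFun hω ⟨s, hs⟩
  have hli : LinearIndependent K (Φ ∘ α) := h.map' Φ hker
  have hcard := hli.fintype_card_le_finrank
  rwa [Module.finrank_pi, Fintype.card_finset_len, Fintype.card_fin] at hcard



/-- Currying the first `a` arguments of the determinant form. -/
noncomputable def pcAltCurry {N a b : ℕ} (h : a + b = N) (u : Fin a → (Fin N → K)) :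
    AlternatingMap K (Fin N → K) K (Fin b) :=
  { toMultilinearMap :=
      (((Pi.basisFun K (Fin N)).det.toMultilinearMap.domDomCongr
        (finSumFinEquiv.trans (finCongr h)).symm).currySum) u
    map_eq_zero_of_eq' := by
      intro v k l heq hne
      have happ : (((Pi.basisFun K (Fin N)).det.toMultilinearMap.domDomCongr
          (finSumFinEquiv.trans (finCongr h)).symm).currySum) u v
          = (Pi.basisFun K (Fin N)).det
            ((Sum.elim u v) ∘ (finSumFinEquiv.trans (finCongr h)).symm) := by
        rw [MultilinearMap.currySum_apply, MultilinearMap.domDomCongr_apply]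
        rfl
      change (((Pi.basisFun K (Fin N)).det.toMultilinearMap.domDomCongr
        (finSumFinEquiv.trans (finCongr h)).symm).currySum) u v = 0
      rw [happ]
      set e := finSumFinEquiv.trans (finCongr h)
      refine (Pi.basisFun K (Fin N)).det.map_eq_zero_of_eq _
        (i := e (Sum.inr k)) (j := e (Sum.inr l)) ?_ ?_
      · simp [e, Function.comp]
        exact heq
      · simp only [ne_eq, EmbeddingLike.apply_eq_iff_eq, Sum.inr.injEq]
        exact hne }

lemma pcAltCurry_apply {N a b : ℕ} (h : a + b = N) (u : Fin a → (Fin N → K))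
    (v : Fin b → (Fin N → K)) :
    pcAltCurry h u v = (Pi.basisFun K (Fin N)).det
      ((Sum.elim u v) ∘ (finSumFinEquiv.trans (finCongr h)).symm) := by
  show (((Pi.basisFun K (Fin N)).det.toMultilinearMap.domDomCongr
      (finSumFinEquiv.trans (finCongr h)).symm).currySum) u v = _
  rw [MultilinearMap.currySum_apply, MultilinearMap.domDomCongr_apply]
  rfl

lemma pcAltCurry_ne_zero {N a b : ℕ} (h : a + b = N) (u : Fin a → (Fin N → K))
    (v : Fin b → (Fin N → K))
    (hspan : Submodule.span K (Set.range u ∪ Set.range v) = ⊤) :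
    pcAltCurry h u v ≠ 0 := by
  rw [pcAltCurry_apply]
  set e := finSumFinEquiv.trans (finCongr h)
  set w := (Sum.elim u v) ∘ e.symm with hw
  have hrange : Set.range w = Set.range u ∪ Set.range v := by
    rw [hw, Set.range_comp, Equiv.range_eq_univ, Set.image_univ, Set.Sum.elim_range]
  have hspan' : ⊤ ≤ Submodule.span K (Set.range w) := by
    rw [hrange, hspan]
  have hcard : Fintype.card (Fin N) = finrank K (Fin N → K) := by
    simp [Module.finrank_pi]
  have hli : LinearIndependent K w :=
    linearIndependent_of_top_le_span_of_card_eq_finrank hspan' hcard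
  have : IsUnit ((Pi.basisFun K (Fin N)).det w) :=
    (Basis.is_basis_iff_det _).1 ⟨hli, top_le_iff.1 hspan'⟩
  exact this.ne_zero

lemma pcAltCurry_eq_zero {N a b : ℕ} (h : a + b = N) (u : Fin a → (Fin N → K))
    (v : Fin b → (Fin N → K))
    (hx : ¬ Disjoint (Submodule.span K (Set.range u)) (Submodule.span K (Set.range v))) :
    pcAltCurry h u v = 0 := by
  rw [pcAltCurry_apply]
  set e := finSumFinEquiv.trans (finCongr h)
  refine AlternatingMap.map_linearDependent _ _ (fun hli => hx ?_)
  have hli2 : LinearIndependent K (Sum.elim u v) := (linearIndependent_equiv e.symm).1 hli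
  exact (linearIndependent_sum.1 hli2).2.2

end PCAux


lemma pc_geom (q : ℕ) (hq : 1 ≤ q) : ∀ t, (q - 1) * (∑ i ∈ range t, q ^ i) + 1 = q ^ t := by
  intro t
  induction t with
  | zero => simp
  | succ t ih =>
    rw [Finset.sum_range_succ, Nat.mul_add, pow_succ]
    have h1 : (q - 1) * q ^ t + q ^ t = q * q ^ t := by
      have : (q - 1) + 1 = q := Nat.succ_pred_eq_of_pos hq
      calc (q - 1) * q ^ t + q ^ t = ((q - 1) + 1) * q ^ t := by ring
        _ = q * q ^ t := by rw [this]
    rw [mul_comm (q ^ t) q, ← h1]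
    omega

lemma pc_arith (q n : ℕ) (hq : 2 ≤ q) :
    ∑ k ∈ range n, (n + 1).choose (k + 1) ≤ (q ^ (n + 1) - 1) / (q - 1) - 1 := by
  have hgeom := pc_geom q (by omega) (n + 1)
  set P := ∑ i ∈ range (n + 1), q ^ i with hP
  have hdiv : (q ^ (n + 1) - 1) / (q - 1) = P := by
    have h1 : q ^ (n + 1) - 1 = (q - 1) * P := by omega
    rw [h1, Nat.mul_div_cancel_left _ (by omega : 0 < q - 1)]
  have hPsum : P = (∑ i ∈ range n, q ^ (i + 1)) + 1 := by
    rw [hP, Finset.sum_range_succ']; simp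
  have hchoose : (∑ k ∈ range n, (n + 1).choose (k + 1)) + 2 = 2 ^ (n + 1) := by
    have h1 := Nat.sum_range_choose (n + 1)
    rw [Finset.sum_range_succ, Finset.sum_range_succ'] at h1
    simp [Nat.choose_self] at h1
    omega
  have h2sum : (∑ k ∈ range n, 2 ^ (k + 1)) + 2 = 2 ^ (n + 1) := by
    have hg := pc_geom 2 (by omega) (n + 1)
    have : (∑ i ∈ range (n + 1), 2 ^ i) = (∑ i ∈ range n, 2 ^ (i + 1)) + 1 := by
      rw [Finset.sum_range_succ']; simp
    norm_num at hg
    omega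
  have heq : ∑ k ∈ range n, (n + 1).choose (k + 1) = ∑ k ∈ range n, 2 ^ (k + 1) := by omega
  have hle : (∑ k ∈ range n, 2 ^ (k + 1)) ≤ ∑ k ∈ range n, q ^ (k + 1) :=
    Finset.sum_le_sum fun i _ => Nat.pow_le_pow_left hq (i + 1)
  rw [heq, hdiv, hPsum]
  simpa using hle




/-- Theorem 3.1: if `A₁, …, Aₘ` and `B₁, …, Bₘ` are nonzero linear subspaces of `F_q^{n+1}`
(nonempty projective subspaces of `n`-dimensional projective space over `F_q`) with
`Aᵢ ∩ Bᵢ = {0}` for all `i` and `Aᵢ ∩ Bⱼ ≠ {0}` for `i < j`, then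
`m ≤ (q^{n+1} − 1)/(q − 1) − 1`. -/
theorem projective_cross_intersecting_bound
    {F : Type*} [Field F] [Fintype F] (q n m : ℕ)
    (hq : q = Fintype.card F) (hn : 1 ≤ n)
    (A B : Fin m → Submodule F (Fin (n + 1) → F))
    (hA : ∀ i, A i ≠ ⊥) (hB : ∀ i, B i ≠ ⊥)
    (hdisj : ∀ i, A i ⊓ B i = ⊥)
    (hcross : ∀ i j, i < j → A i ⊓ B j ≠ ⊥) :
    m ≤ (q ^ (n + 1) - 1) / (q - 1) - 1 := by
  classical
  have hq2 : 2 ≤ q := by rw [hq]; exact Fintype.one_lt_card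
  -- enlarge each `A i` to a complement of `B i`
  choose C hAC hCB using fun i => pc_exists_isCompl_of_inf_eq_bot (A i) (B i) (hdisj i)
  have hVrank : finrank F (Fin (n + 1) → F) = n + 1 := by
    simp [Module.finrank_pi]
  set d : Fin m → ℕ := fun i => finrank F (B i) with hd
  have hsumrank : ∀ i, finrank F (C i) + d i = n + 1 := by
    intro i
    show finrank F (C i) + finrank F (B i) = n + 1
    have h := Submodule.finrank_add_eq_of_isCompl (hCB i)
    rw [hVrank] at h
    exact h
  have hd1 : ∀ i, 1 ≤ d i := by
    intro i
    by_contra h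
    have : d i = 0 := by omega
    have : B i = ⊥ := by
      rw [← Submodule.finrank_eq_zero (R := F)]; exact this
    exact hB i this
  have hCne : ∀ i, 1 ≤ finrank F (C i) := by
    intro i
    by_contra h
    have h0 : finrank F (C i) = 0 := by omega
    have : C i = ⊥ := by rw [← Submodule.finrank_eq_zero (R := F)]; exact h0
    have : A i = ⊥ := le_bot_iff.1 (this ▸ hAC i)
    exact hA i this
  have hdn : ∀ i, d i ≤ n := fun i => by have := hsumrank i; have := hCne i; omega
  -- fiberwise count
  have hcount : m = ∑ k ∈ range n, (univ.filter (fun i => d i - 1 = k)).card := by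
    have := Finset.card_eq_sum_card_fiberwise
      (f := fun i : Fin m => d i - 1) (s := univ) (t := range n)
      (fun i _ => by
        rw [Finset.mem_coe, Finset.mem_range]
        show d i - 1 < n
        have := hd1 i; have := hdn i; omega)
    simpa using this
  -- class bound
  have hclass : ∀ k ∈ range n,
      (univ.filter (fun i : Fin m => d i - 1 = k)).card ≤ (n + 1).choose (k + 1) := by
    intro k hk
    rw [Finset.mem_range] at hk
    have hak : (n - k) + (k + 1) = n + 1 := by omega
    set ι := {i : Fin m // d i - 1 = k} with hι
    have hdi : ∀ i : ι, d i.1 = k + 1 := fun i => by have := hd1 i.1; have := i.2; omega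
    have hfrC : ∀ i : ι, finrank F (C i.1) = n - k := fun i => by
      have := hsumrank i.1; have := hdi i; omega
    have hfrB : ∀ i : ι, finrank F (B i.1) = k + 1 := fun i => hdi i
    -- tuples
    set u : ι → Fin (n - k) → (Fin (n + 1) → F) := fun i j =>
      ((Module.finBasis F (C i.1)).reindex (finCongr (hfrC i)) j : Fin (n + 1) → F) with hu
    set w : ι → Fin (k + 1) → (Fin (n + 1) → F) := fun i j =>
      ((Module.finBasis F (B i.1)).reindex (finCongr (hfrB i)) j : Fin (n + 1) → F) with hw
    have hspanu : ∀ i : ι, Submodule.span F (Set.range (u i)) = C i.1 := by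
      intro i
      rw [hu]
      have : Set.range (fun j => ((Module.finBasis F (C i.1)).reindex (finCongr (hfrC i)) j :
          Fin (n + 1) → F)) = (C i.1).subtype ''
          (Set.range ((Module.finBasis F (C i.1)).reindex (finCongr (hfrC i)))) := by
        rw [← Set.range_comp]; rfl
      rw [this, Submodule.span_image, Basis.span_eq, Submodule.map_subtype_top]
    have hspanw : ∀ i : ι, Submodule.span F (Set.range (w i)) = B i.1 := by
      intro i
      rw [hw]
      have : Set.range (fun j => ((Module.finBasis F (B i.1)).reindex (finCongr (hfrB i)) j :
          Fin (n + 1) → F)) = (B i.1).subtype ''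
          (Set.range ((Module.finBasis F (B i.1)).reindex (finCongr (hfrB i)))) := by
        rw [← Set.range_comp]; rfl
      rw [this, Submodule.span_image, Basis.span_eq, Submodule.map_subtype_top]
    set α : ι → AlternatingMap F (Fin (n + 1) → F) F (Fin (k + 1)) :=
      fun i => pcAltCurry hak (u i) with hα
    set E : ι → (AlternatingMap F (Fin (n + 1) → F) F (Fin (k + 1)) →ₗ[F] F) := fun j =>
      { toFun := fun ω => ω (w j)
        map_add' := fun ω₁ ω₂ => rfl
        map_smul' := fun c ω => rfl } with hE
    have hdiag : ∀ i : ι, E i (α i) ≠ 0 := by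
      intro i
      show pcAltCurry hak (u i) (w i) ≠ 0
      refine pcAltCurry_ne_zero hak (u i) (w i) ?_
      rw [Submodule.span_union, hspanu i, hspanw i]
      exact codisjoint_iff.1 (hCB i.1).codisjoint
    have hzero : ∀ i j : ι, i < j → E j (α i) = 0 := by
      intro i j hij
      show pcAltCurry hak (u i) (w j) = 0
      refine pcAltCurry_eq_zero hak (u i) (w j) ?_
      rw [hspanu i, hspanw j]
      intro hdis
      refine hcross i.1 j.1 hij ?_
      have h1 : A i.1 ⊓ B j.1 ≤ C i.1 ⊓ B j.1 := inf_le_inf_right _ (hAC i.1)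
      have h2 : C i.1 ⊓ B j.1 = ⊥ := disjoint_iff.1 hdis
      exact le_bot_iff.1 (h2 ▸ h1)
    have hli : LinearIndependent F α :=
      pc_linearIndependent_of_triangular α E hdiag hzero
    have hcard := pc_card_le_choose α hli
    rwa [Fintype.card_subtype] at hcard
  calc m = ∑ k ∈ range n, (univ.filter (fun i : Fin m => d i - 1 = k)).card := hcount
    _ ≤ ∑ k ∈ range n, (n + 1).choose (k + 1) := Finset.sum_le_sum hclass
    _ ≤ (q ^ (n + 1) - 1) / (q - 1) - 1 := pc_arith q n hq2
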